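/- Let h : ℝ → ℝ be a function supported in the interval (π/4, π], and for z ∈ ℝ define b_z = (1/(2π)) ∫₀^∞ ω^z h(ω)² ω dω and d_z = (1/(2π)) ∫₀^∞ ω^z h(ω) h(2ω) ω dω (assuming these integrals are finite and h is not almost everywhere equal to ω ↦ h(2ω) on the relevant overlap). Then |d_z| ≤ 2^{-(z/2+2)} b_z, i.e. b_z ≥ 2^{z/2+2} |d_z|. -/

import Mathlib

open MeasureTheory Real Set

/-- For `h` supported in `(π/4, π]`, with
`b_z = (1/(2π)) ∫₀^∞ ω^z h(ω)² ω dω` and `d_z = (1/(2π)) ∫₀^∞ ω^z h(ω) h(2ω) ω dω`,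
one has `|d_z| ≤ 2^{-(z/2+2)} b_z`, i.e. `b_z ≥ 2^{z/2+2} |d_z|`. -/
theorem stmt_0 (h : ℝ → ℝ) (z : ℝ) (hmeas : Measurable h)
    (hsupp : ∀ ω : ℝ, ω ∉ Set.Ioc (π / 4) π → h ω = 0)
    (hint : IntegrableOn (fun ω : ℝ => ω ^ z * h ω ^ 2 * ω) (Set.Ioi 0))
    (bz dz : ℝ)
    (hb : bz = (1 / (2 * π)) * ∫ ω in Set.Ioi (0 : ℝ), ω ^ z * h ω ^ 2 * ω)
    (hd : dz = (1 / (2 * π)) * ∫ ω in Set.Ioi (0 : ℝ), ω ^ z * h ω * h (2 * ω) * ω) :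
    |dz| ≤ (2 : ℝ) ^ (-(z / 2 + 2)) * bz ∧ (2 : ℝ) ^ (z / 2 + 2) * |dz| ≤ bz := by
  have hπ : (0:ℝ) < π := pi_pos
  set f : ℝ → ℝ := fun ω => ω ^ z * h ω ^ 2 * ω with hfdef
  set g : ℝ → ℝ := fun ω => ω ^ z * h ω * h (2 * ω) * ω with hgdef
  set F : ℝ → ℝ := fun ω => ω ^ z * h (2 * ω) ^ 2 * ω with hFdef
  set S : Set ℝ := Set.Ioc (π/4) (π/2) with hSdef
  set T : Set ℝ := Set.Ioc (π/2) π with hTdef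
  have hSsub : S ⊆ Set.Ioi (0:ℝ) := fun x hx => lt_trans (by positivity) hx.1
  have hTsub : T ⊆ Set.Ioi (0:ℝ) := fun x hx => lt_trans (by positivity) hx.1
  -- support of f
  have hf0 : ∀ ω : ℝ, ω ∉ Set.Ioc (π/4) π → f ω = 0 := by
    intro ω hω; simp [hfdef, hsupp ω hω]
  -- support of g
  have hg0 : ∀ ω : ℝ, ω ∉ S → g ω = 0 := by
    intro ω hω
    by_cases h1 : ω ∈ Set.Ioc (π/4) π
    · have hω2 : π/2 < ω := by
        by_contra hle
        exact hω ⟨h1.1, not_lt.mp hle⟩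
      have : h (2 * ω) = 0 := hsupp _ (by
        intro hm
        have := hm.2
        linarith)
      simp [hgdef, this]
    · simp [hgdef, hsupp ω h1]
  -- integrability
  have hIS : IntegrableOn f S := hint.mono_set hSsub
  have hIT : IntegrableOn f T := hint.mono_set hTsub
  have hGint : Integrable (T.indicator f) := hIT.integrable_indicator measurableSet_Ioc
  have hG2 : Integrable (fun ω => T.indicator f (2 * ω)) := hGint.comp_mul_left' two_ne_zero
  -- key pointwise identity for the substitution
  have hkey : ∀ ω : ℝ, S.indicator F ω = (2:ℝ) ^ (-(z+1)) * T.indicator f (2 * ω) := by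
    intro ω
    by_cases hω : ω ∈ S
    · have hmem : 2 * ω ∈ T := ⟨by linarith [hω.1], by linarith [hω.2]⟩
      have hω0 : (0:ℝ) < ω := lt_trans (by positivity) hω.1
      rw [Set.indicator_of_mem hω, Set.indicator_of_mem hmem]
      have hr : (2 * ω) ^ z = (2:ℝ) ^ z * ω ^ z := Real.mul_rpow (by norm_num) hω0.le
      have h21 : (2:ℝ) ^ (-(z+1)) * (2:ℝ) ^ z * 2 = 1 := by
        rw [← Real.rpow_add two_pos, show -(z+1) + z = (-1:ℝ) by ring,
          Real.rpow_neg_one]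
        norm_num
      simp only [hfdef, hFdef, hr]
      linear_combination (-(ω ^ z * h (2*ω) ^ 2 * ω)) * h21
    · have hm2 : 2 * ω ∉ T := by
        intro hm
        exact hω ⟨by linarith [hm.1], by linarith [hm.2]⟩
      rw [Set.indicator_of_notMem hω, Set.indicator_of_notMem hm2, mul_zero]
  -- integrability of F on S
  have hFint : IntegrableOn F S := by
    have h1 : Integrable (S.indicator F) := by
      rw [funext hkey]
      exact hG2.const_mul _
    exact (integrable_indicator_iff measurableSet_Ioc).mp h1
  -- substitution identity
  have hK : ∫ ω in S, F ω = (2:ℝ) ^ (-(z+2)) * ∫ ω in T, f ω := by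
    rw [← integral_indicator measurableSet_Ioc]
    simp_rw [← hSdef, hkey]
    rw [integral_const_mul, MeasureTheory.Measure.integral_comp_mul_left (T.indicator f) 2,
      integral_indicator measurableSet_Ioc, smul_eq_mul]
    have hc : (2:ℝ) ^ (-(z+1)) * |(2:ℝ)⁻¹| = (2:ℝ) ^ (-(z+2)) := by
      rw [abs_of_pos (by norm_num : (0:ℝ) < (2:ℝ)⁻¹),
        show ((2:ℝ)⁻¹) = (2:ℝ) ^ (-1:ℝ) by rw [Real.rpow_neg_one],
        ← Real.rpow_add two_pos]
      congr 1
      ring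
    linear_combination (∫ ω in T, f ω) * hc
  -- AM-GM pointwise
  set s : ℝ := (2:ℝ) ^ (-(z/2+1)) with hsdef
  have spos : 0 < s := Real.rpow_pos_of_pos two_pos _
  have hbound : ∀ ω ∈ S, |g ω| ≤ s/2 * f ω + s⁻¹/2 * F ω := by
    intro ω hω
    have hω0 : (0:ℝ) < ω := lt_trans (by positivity) hω.1
    have hr : (0:ℝ) ≤ ω ^ z * ω := by positivity
    have hab : 2 * |h ω| * |h (2*ω)| ≤ s * h ω ^ 2 + s⁻¹ * h (2*ω) ^ 2 := by
      have key : 2 * s * (|h ω| * |h (2*ω)|) ≤ s^2 * h ω ^ 2 + h (2*ω) ^ 2 := by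
        nlinarith [sq_nonneg (s * |h ω| - |h (2*ω)|), sq_abs (h ω), sq_abs (h (2*ω))]
      have step := mul_le_mul_of_nonneg_left key (inv_nonneg.2 spos.le)
      have e : s⁻¹ * (2 * s * (|h ω| * |h (2*ω)|)) = 2 * |h ω| * |h (2*ω)| := by
        field_simp
      have e' : s⁻¹ * (s^2 * h ω ^ 2 + h (2*ω) ^ 2)
          = s * h ω ^ 2 + s⁻¹ * h (2*ω) ^ 2 := by
        field_simp
      rw [e, e'] at step
      exact step
    have hgabs : |g ω| = (ω ^ z * ω) * (2 * |h ω| * |h (2*ω)|) / 2 := by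
      simp only [hgdef, abs_mul, abs_of_pos hω0,
        abs_of_nonneg (Real.rpow_nonneg hω0.le z)]
      ring
    rw [hgabs]
    have := mul_le_mul_of_nonneg_left hab hr
    simp only [hfdef, hFdef]
    nlinarith [this]
  -- integrability of g on S
  have hgm : Measurable g := by
    exact (((measurable_id.pow_const z).mul hmeas).mul
      (hmeas.comp (measurable_const_mul 2))).mul measurable_id
  have hbint : IntegrableOn (fun ω => s/2 * f ω + s⁻¹/2 * F ω) S :=
    (hIS.const_mul _).add (hFint.const_mul _)
  have hgint : IntegrableOn g S := by
    refine hbint.mono' hgm.aestronglyMeasurable.restrict ?_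
    refine (ae_restrict_iff' measurableSet_Ioc).2 (ae_of_all _ fun ω hω => ?_)
    rw [Real.norm_eq_abs]
    exact hbound ω hω
  -- bound the integral
  have hDle : |∫ ω in S, g ω| ≤ s/2 * (∫ ω in S, f ω) + s⁻¹/2 * ∫ ω in S, F ω := by
    calc |∫ ω in S, g ω| ≤ ∫ ω in S, |g ω| := by
          simpa [Real.norm_eq_abs] using
            norm_integral_le_integral_norm (μ := volume.restrict S) g
      _ ≤ ∫ ω in S, (s/2 * f ω + s⁻¹/2 * F ω) :=
          setIntegral_mono_on hgint.abs hbint measurableSet_Ioc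
            (fun ω hω => hbound ω hω)
      _ = s/2 * (∫ ω in S, f ω) + s⁻¹/2 * ∫ ω in S, F ω := by
          rw [integral_add (hIS.const_mul _) (hFint.const_mul _),
            integral_const_mul, integral_const_mul]
  -- the d-integral localizes to S
  have hDS : ∫ ω in Set.Ioi (0:ℝ), g ω = ∫ ω in S, g ω := by
    rw [setIntegral_eq_integral_of_forall_compl_eq_zero
      (fun ω hω => hg0 ω (fun hm => hω (hSsub hm))),
      setIntegral_eq_integral_of_forall_compl_eq_zero (fun ω hω => hg0 ω hω)]
  -- the b-integral splits
  have hIsplit : ∫ ω in Set.Ioi (0:ℝ), f ω = (∫ ω in S, f ω) + ∫ ω in T, f ω := by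
    have h1 : ∫ ω in Set.Ioi (0:ℝ), f ω = ∫ ω in Set.Ioc (π/4) π, f ω := by
      rw [show (∫ ω in Set.Ioi (0:ℝ), f ω) = ∫ ω, f ω from
          setIntegral_eq_integral_of_forall_compl_eq_zero
            (fun ω hω => hf0 ω (fun hm => hω (lt_trans (by positivity) hm.1))),
        show (∫ ω in Set.Ioc (π/4) π, f ω) = ∫ ω, f ω from
          setIntegral_eq_integral_of_forall_compl_eq_zero (fun ω hω => hf0 ω hω)]
    rw [h1, ← Set.Ioc_union_Ioc_eq_Ioc (by linarith : π/4 ≤ π/2) (by linarith : π/2 ≤ π)]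
    exact setIntegral_union (Set.Ioc_disjoint_Ioc_of_le le_rfl) measurableSet_Ioc hIS hIT
  -- nonnegativity
  have hI0 : 0 ≤ ∫ ω in Set.Ioi (0:ℝ), f ω := by
    refine setIntegral_nonneg measurableSet_Ioi fun ω hω => ?_
    have : (0:ℝ) < ω := hω
    exact mul_nonneg (mul_nonneg (Real.rpow_nonneg this.le z) (sq_nonneg _)) this.le
  -- coefficient identities
  have e1 : s/2 = (2:ℝ) ^ (-(z/2+2)) := by
    rw [hsdef, show (2:ℝ) ^ (-(z/2+2)) = (2:ℝ) ^ (-(z/2+1)) * (2:ℝ) ^ (-1:ℝ) by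
      rw [← Real.rpow_add two_pos]; ring_nf, Real.rpow_neg_one]
    ring
  have hsinv : s⁻¹ = (2:ℝ) ^ (z/2+1) := by
    rw [hsdef, Real.rpow_neg (by norm_num : (0:ℝ) ≤ 2), inv_inv]
  have e2 : s⁻¹/2 * (2:ℝ) ^ (-(z+2)) = (2:ℝ) ^ (-(z/2+2)) := by
    rw [hsinv, div_mul_eq_mul_div, ← Real.rpow_add two_pos,
      show z/2+1 + -(z+2) = -(z/2+2) + 1 by ring, Real.rpow_add two_pos,
      Real.rpow_one]
    ring
  -- main estimate
  have hc0 : (0:ℝ) < 1 / (2 * π) := by positivity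
  have hDfull : |∫ ω in S, g ω| ≤ (2:ℝ) ^ (-(z/2+2)) * ∫ ω in Set.Ioi (0:ℝ), f ω := by
    calc |∫ ω in S, g ω| ≤ s/2 * (∫ ω in S, f ω) + s⁻¹/2 * ∫ ω in S, F ω := hDle
      _ = (2:ℝ) ^ (-(z/2+2)) * ((∫ ω in S, f ω) + ∫ ω in T, f ω) := by
          rw [hK]
          linear_combination (∫ ω in S, f ω) * e1 + (∫ ω in T, f ω) * e2
      _ = (2:ℝ) ^ (-(z/2+2)) * ∫ ω in Set.Ioi (0:ℝ), f ω := by rw [hIsplit]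
  have main : |dz| ≤ (2:ℝ) ^ (-(z/2+2)) * bz := by
    rw [hd, hb, abs_mul, abs_of_pos hc0, hDS]
    calc 1/(2*π) * |∫ ω in S, g ω|
        ≤ 1/(2*π) * ((2:ℝ) ^ (-(z/2+2)) * ∫ ω in Set.Ioi (0:ℝ), f ω) :=
          mul_le_mul_of_nonneg_left hDfull hc0.le
      _ = (2:ℝ) ^ (-(z/2+2)) * (1/(2*π) * ∫ ω in Set.Ioi (0:ℝ), f ω) := by ring
  refine ⟨main, ?_⟩
  have hpow : (2:ℝ) ^ (z/2+2) * (2:ℝ) ^ (-(z/2+2)) = 1 := by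
    rw [← Real.rpow_add two_pos, show z/2+2 + -(z/2+2) = (0:ℝ) by ring, Real.rpow_zero]
  calc (2:ℝ) ^ (z/2+2) * |dz|
      ≤ (2:ℝ) ^ (z/2+2) * ((2:ℝ) ^ (-(z/2+2)) * bz) :=
        mul_le_mul_of_nonneg_left main (Real.rpow_pos_of_pos two_pos _).le
    _ = bz := by rw [← mul_assoc, hpow, one_mul]
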